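/- arXiv:2211.01416 — 2 statements merged into one kernel-verified Lean document; each statement's English description precedes it below -/
import Mathlib

section
/- Let R be a commutative ring with unity, I an ideal of R, and let φ, φ* be invertible skew-symmetric matrices of size 2n over R such that φ = (1 ⊥ ε)^t φ* (1 ⊥ ε) for some ε in the relative elementary group E_{2n−1}(R,I). Then ESp_φ(R,I) = (1 ⊥ ε)^{−1} ESp_{φ*}(R,I) (1 ⊥ ε). -/
/- Common definitions: symplectic groups with respect to an invertible
   skew-symmetric (alternating) matrix, elementary symplectic groups,
   Pfaffian, standard symplectic matrix, elementary linear groups. -/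

namespace PaperESp

open Matrix

variable {R : Type*} [CommRing R]

/-- The Pfaffian of a `2n × 2n` matrix, as the sum over perfect matchings. -/
def pf {n : ℕ} (A : Matrix (Fin (2*n)) (Fin (2*n)) R) : R :=
  ∑ σ ∈ Finset.univ.filter (fun σ : Equiv.Perm (Fin (2*n)) =>
      (∀ k : Fin n, (σ ⟨2*k.1, by have := k.2; omega⟩).1 < (σ ⟨2*k.1+1, by have := k.2; omega⟩).1) ∧
      (∀ k l : Fin n, k < l →
        (σ ⟨2*k.1, by have := k.2; omega⟩).1 < (σ ⟨2*l.1, by have := l.2; omega⟩).1)),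
    ((Equiv.Perm.sign σ : ℤ) : R) *
      ∏ k : Fin n, A (σ ⟨2*k.1, by have := k.2; omega⟩) (σ ⟨2*k.1+1, by have := k.2; omega⟩)

/-- `φ = [[0, -cᵀ],[c, ν]]`: the column `c`. -/
def cvec {n : ℕ} (φ : Matrix (Fin (2*n)) (Fin (2*n)) R) : Fin (2*n-1) → R :=
  fun i => φ ⟨i.1+1, by have := i.2; omega⟩ ⟨0, by have := i.2; omega⟩

/-- `φ = [[0, -cᵀ],[c, ν]]`: the block `ν`. -/
def nuMat {n : ℕ} (φ : Matrix (Fin (2*n)) (Fin (2*n)) R) :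
    Matrix (Fin (2*n-1)) (Fin (2*n-1)) R :=
  Matrix.of fun i j => φ ⟨i.1+1, by have := i.2; omega⟩ ⟨j.1+1, by have := j.2; omega⟩

/-- `φ⁻¹ = [[0, dᵀ],[-d, μ]]`: the row `d`. -/
noncomputable def dvec {n : ℕ} (φ : Matrix (Fin (2*n)) (Fin (2*n)) R) : Fin (2*n-1) → R :=
  fun i => φ⁻¹ ⟨0, by have := i.2; omega⟩ ⟨i.1+1, by have := i.2; omega⟩

/-- `φ⁻¹ = [[0, dᵀ],[-d, μ]]`: the block `μ`. -/
noncomputable def muMat {n : ℕ} (φ : Matrix (Fin (2*n)) (Fin (2*n)) R) :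
    Matrix (Fin (2*n-1)) (Fin (2*n-1)) R :=
  Matrix.of fun i j => φ⁻¹ ⟨i.1+1, by have := i.2; omega⟩ ⟨j.1+1, by have := j.2; omega⟩

/-- Vaserstein's matrix `α_φ(v) = I + d vᵀ ν`. -/
noncomputable def alphaMat {n : ℕ} (φ : Matrix (Fin (2*n)) (Fin (2*n)) R) (v : Fin (2*n-1) → R) :
    Matrix (Fin (2*n-1)) (Fin (2*n-1)) R :=
  1 + Matrix.of fun i j => dvec φ i * ∑ k, v k * nuMat φ k j

/-- Vaserstein's matrix `β_φ(v) = I + μ v cᵀ`. -/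
noncomputable def betaMat {n : ℕ} (φ : Matrix (Fin (2*n)) (Fin (2*n)) R) (v : Fin (2*n-1) → R) :
    Matrix (Fin (2*n-1)) (Fin (2*n-1)) R :=
  1 + Matrix.of fun i j => (∑ k, muMat φ i k * v k) * cvec φ j

/-- The generator `C_φ(v) = [[1, 0],[v, α_φ(v)]]`. -/
noncomputable def Cmat {n : ℕ} (φ : Matrix (Fin (2*n)) (Fin (2*n)) R) (v : Fin (2*n-1) → R) :
    Matrix (Fin (2*n)) (Fin (2*n)) R :=
  Matrix.of fun i j =>
    if hi : i.1 = 0 then (if j.1 = 0 then (1:R) else 0)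
    else if hj : j.1 = 0 then v ⟨i.1-1, by have := i.2; omega⟩
    else alphaMat φ v ⟨i.1-1, by have := i.2; omega⟩ ⟨j.1-1, by have := j.2; omega⟩

/-- The generator `R_φ(v) = [[1, vᵀ],[0, β_φ(v)]]`. -/
noncomputable def Rmat {n : ℕ} (φ : Matrix (Fin (2*n)) (Fin (2*n)) R) (v : Fin (2*n-1) → R) :
    Matrix (Fin (2*n)) (Fin (2*n)) R :=
  Matrix.of fun i j =>
    if hi : i.1 = 0 then (if hj : j.1 = 0 then (1:R) else v ⟨j.1-1, by have := j.2; omega⟩)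
    else if hj : j.1 = 0 then 0
    else betaMat φ v ⟨i.1-1, by have := i.2; omega⟩ ⟨j.1-1, by have := j.2; omega⟩

/-- The symplectic group `Sp_φ(R) = {α ∈ GL_m(R) | αᵀ φ α = φ}`, as a subgroup of the
    units of the matrix ring. -/
def Sp {m : ℕ} (φ : Matrix (Fin m) (Fin m) R) : Subgroup (Matrix (Fin m) (Fin m) R)ˣ where
  carrier := {g | (↑g : Matrix (Fin m) (Fin m) R)ᵀ * φ * (↑g : Matrix (Fin m) (Fin m) R) = φ}
  one_mem' := by simp
  mul_mem' := by
    intro a b ha hb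
    simp only [Set.mem_setOf_eq, Units.val_mul] at *
    have h : ((↑a : Matrix (Fin m) (Fin m) R) * (↑b : Matrix (Fin m) (Fin m) R))ᵀ * φ *
          ((↑a : Matrix (Fin m) (Fin m) R) * (↑b : Matrix (Fin m) (Fin m) R))
        = (↑b : Matrix (Fin m) (Fin m) R)ᵀ *
            ((↑a : Matrix (Fin m) (Fin m) R)ᵀ * φ * (↑a : Matrix (Fin m) (Fin m) R)) *
            (↑b : Matrix (Fin m) (Fin m) R) := by
      simp only [Matrix.transpose_mul, Matrix.mul_assoc]
    rw [h, ha, hb]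
  inv_mem' := by
    intro a ha
    simp only [Set.mem_setOf_eq] at *
    have h : (↑a⁻¹ : Matrix (Fin m) (Fin m) R)ᵀ * φ * (↑a⁻¹ : Matrix (Fin m) (Fin m) R)
        = (↑a⁻¹ : Matrix (Fin m) (Fin m) R)ᵀ *
            ((↑a : Matrix (Fin m) (Fin m) R)ᵀ * φ * (↑a : Matrix (Fin m) (Fin m) R)) *
            (↑a⁻¹ : Matrix (Fin m) (Fin m) R) := by
      rw [ha]
    rw [h]
    have h2 : (↑a⁻¹ : Matrix (Fin m) (Fin m) R)ᵀ *
          ((↑a : Matrix (Fin m) (Fin m) R)ᵀ * φ * (↑a : Matrix (Fin m) (Fin m) R)) *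
          (↑a⁻¹ : Matrix (Fin m) (Fin m) R)
        = ((↑a : Matrix (Fin m) (Fin m) R) * (↑a⁻¹ : Matrix (Fin m) (Fin m) R))ᵀ * φ *
          ((↑a : Matrix (Fin m) (Fin m) R) * (↑a⁻¹ : Matrix (Fin m) (Fin m) R)) := by
      simp only [Matrix.transpose_mul, Matrix.mul_assoc]
    rw [h2, Units.mul_inv]
    simp

/-- The elementary symplectic group `ESp_φ(R)` with respect to `φ`, generated by the
    `C_φ(v)` and `R_φ(v)`. -/
def Esp {n : ℕ} (φ : Matrix (Fin (2*n)) (Fin (2*n)) R) :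
    Subgroup (Matrix (Fin (2*n)) (Fin (2*n)) R)ˣ :=
  Subgroup.closure {g | ∃ v : Fin (2*n-1) → R,
    (↑g : Matrix (Fin (2*n)) (Fin (2*n)) R) = Cmat φ v ∨
    (↑g : Matrix (Fin (2*n)) (Fin (2*n)) R) = Rmat φ v}

/-- `ESp_φ(I)`, generated by the `C_φ(v)`, `R_φ(v)` with `v ∈ I^{2n-1}`. -/
def EspIdeal {n : ℕ} (φ : Matrix (Fin (2*n)) (Fin (2*n)) R) (I : Ideal R) :
    Subgroup (Matrix (Fin (2*n)) (Fin (2*n)) R)ˣ :=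
  Subgroup.closure {g | ∃ v : Fin (2*n-1) → R, (∀ i, v i ∈ I) ∧
    ((↑g : Matrix (Fin (2*n)) (Fin (2*n)) R) = Cmat φ v ∨
     (↑g : Matrix (Fin (2*n)) (Fin (2*n)) R) = Rmat φ v)}

/-- The relative elementary symplectic group `ESp_φ(R,I)`: the normal closure of
    `ESp_φ(I)` in `ESp_φ(R)`. -/
def REsp {n : ℕ} (φ : Matrix (Fin (2*n)) (Fin (2*n)) R) (I : Ideal R) :
    Subgroup (Matrix (Fin (2*n)) (Fin (2*n)) R)ˣ :=
  Subgroup.closure {g | ∃ e ∈ Esp φ, ∃ x ∈ EspIdeal φ I, g = e * x * e⁻¹}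

/-- The standard skew-symmetric matrix `ψ_n = Σ (e_{2i-1,2i} - e_{2i,2i-1})` (1-based). -/
def psi (R : Type*) [CommRing R] (n : ℕ) : Matrix (Fin (2*n)) (Fin (2*n)) R :=
  Matrix.of fun i j =>
    if i.1 + 1 = j.1 ∧ j.1 % 2 = 1 then (1:R)
    else if j.1 + 1 = i.1 ∧ i.1 % 2 = 1 then -1
    else 0

/-- The permutation `σ` of `{1,…,2n}` with `σ(2i-1) = 2i`, `σ(2i) = 2i-1` (0-based swap of
    `2i ↔ 2i+1`). -/
def sigmaFn (n : ℕ) (i : Fin (2*n)) : Fin (2*n) :=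
  if h : i.1 % 2 = 0 then ⟨i.1+1, by have := i.2; omega⟩ else ⟨i.1-1, by have := i.2; omega⟩

/-- The elementary symplectic generators `se_{ij}(a)`. -/
def seMat {R : Type*} [CommRing R] (n : ℕ) (i j : Fin (2*n)) (a : R) :
    Matrix (Fin (2*n)) (Fin (2*n)) R :=
  if i = sigmaFn n j then 1 + Matrix.single i j a
  else 1 + Matrix.single i j a
         - Matrix.single (sigmaFn n j) (sigmaFn n i) ((-1:R)^(i.1+j.1) * a)

/-- The elementary symplectic group `ESp_{2n}(R)`. -/
def Esp2n (R : Type*) [CommRing R] (n : ℕ) : Subgroup (Matrix (Fin (2*n)) (Fin (2*n)) R)ˣ :=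
  Subgroup.closure {g | ∃ i j : Fin (2*n), ∃ a : R, i ≠ j ∧
    (↑g : Matrix (Fin (2*n)) (Fin (2*n)) R) = seMat n i j a}

/-- `ESp_{2n}(I)`. -/
def Esp2nIdeal (R : Type*) [CommRing R] (n : ℕ) (I : Ideal R) :
    Subgroup (Matrix (Fin (2*n)) (Fin (2*n)) R)ˣ :=
  Subgroup.closure {g | ∃ i j : Fin (2*n), ∃ x : R, i ≠ j ∧ x ∈ I ∧
    (↑g : Matrix (Fin (2*n)) (Fin (2*n)) R) = seMat n i j x}

/-- The relative elementary symplectic group `ESp_{2n}(R,I)`: the normal closure of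
    `ESp_{2n}(I)` in `ESp_{2n}(R)`. -/
def REsp2n (R : Type*) [CommRing R] (n : ℕ) (I : Ideal R) :
    Subgroup (Matrix (Fin (2*n)) (Fin (2*n)) R)ˣ :=
  Subgroup.closure {g | ∃ e ∈ Esp2n R n, ∃ x ∈ Esp2nIdeal R n I, g = e * x * e⁻¹}

/-- The elementary linear group `E_m(R)`. -/
def Egrp (R : Type*) [CommRing R] (m : ℕ) : Subgroup (Matrix (Fin m) (Fin m) R)ˣ :=
  Subgroup.closure {g | ∃ i j : Fin m, ∃ a : R, i ≠ j ∧
    (↑g : Matrix (Fin m) (Fin m) R) = 1 + Matrix.single i j a}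

/-- `E_m(I)`. -/
def EgrpIdeal (R : Type*) [CommRing R] (m : ℕ) (I : Ideal R) :
    Subgroup (Matrix (Fin m) (Fin m) R)ˣ :=
  Subgroup.closure {g | ∃ i j : Fin m, ∃ x : R, i ≠ j ∧ x ∈ I ∧
    (↑g : Matrix (Fin m) (Fin m) R) = 1 + Matrix.single i j x}

/-- The relative elementary linear group `E_m(R,I)`: the normal closure of `E_m(I)`
    in `E_m(R)`. -/
def REgrp (R : Type*) [CommRing R] (m : ℕ) (I : Ideal R) :
    Subgroup (Matrix (Fin m) (Fin m) R)ˣ :=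
  Subgroup.closure {g | ∃ e ∈ Egrp R m, ∃ x ∈ EgrpIdeal R m I, g = e * x * e⁻¹}

/-- `1 ⊥ β`: the block diagonal matrix `diag(1, β)` of size `2n`. -/
def onePerp {n : ℕ} (β : Matrix (Fin (2*n-1)) (Fin (2*n-1)) R) :
    Matrix (Fin (2*n)) (Fin (2*n)) R :=
  Matrix.of fun i j =>
    if hi : i.1 = 0 then (if j.1 = 0 then (1:R) else 0)
    else if hj : j.1 = 0 then 0
    else β ⟨i.1-1, by have := i.2; omega⟩ ⟨j.1-1, by have := j.2; omega⟩

/-- The congruence kernel: invertible matrices reducing to the identity modulo `I`. -/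
def congrKer (R : Type*) [CommRing R] (m : ℕ) (I : Ideal R) :
    Subgroup (Matrix (Fin m) (Fin m) R)ˣ :=
  (Units.map ((Ideal.Quotient.mk I).mapMatrix.toMonoidHom :
      Matrix (Fin m) (Fin m) R →* Matrix (Fin m) (Fin m) (R ⧸ I))).ker

/-- `Sp_φ(R,I)`: the kernel of the reduction map `Sp_φ(R) → Sp_φ(R/I)`. -/
def SpRel {m : ℕ} (φ : Matrix (Fin m) (Fin m) R) (I : Ideal R) :
    Subgroup (Matrix (Fin m) (Fin m) R)ˣ :=
  Sp φ ⊓ congrKer R m I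


/-! ### Auxiliary machinery for Statement 18 -/

section Aux18

variable {R : Type*} [CommRing R] {n : ℕ}

private lemma sum_split18 {M : Type*} [AddCommMonoid M] {m : ℕ} (hm : 0 < m) (f : Fin m → M) :
    ∑ k, f k = f ⟨0, hm⟩ + ∑ k : Fin (m-1), f ⟨k.1+1, by have := k.2; omega⟩ := by
  rcases m with _ | m
  · omega
  · rw [Fin.sum_univ_succ]
    congr 1

/-- Block matrix `[[a, wᵀ],[v, D]]` of size `2n`. -/
def blk18 (a : R) (w v : Fin (2*n-1) → R) (D : Matrix (Fin (2*n-1)) (Fin (2*n-1)) R) :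
    Matrix (Fin (2*n)) (Fin (2*n)) R :=
  Matrix.of fun i j =>
    if hi : i.1 = 0 then (if hj : j.1 = 0 then a else w ⟨j.1-1, by have := j.2; omega⟩)
    else if hj : j.1 = 0 then v ⟨i.1-1, by have := i.2; omega⟩
    else D ⟨i.1-1, by have := i.2; omega⟩ ⟨j.1-1, by have := j.2; omega⟩

lemma blk18_congr {a a' : R} {w v w' v' : Fin (2*n-1) → R}
    {D D' : Matrix (Fin (2*n-1)) (Fin (2*n-1)) R}
    (ha : a = a') (hw : w = w') (hv : v = v') (hD : D = D') :
    blk18 a w v D = blk18 a' w' v' D' := by rw [ha, hw, hv, hD]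

lemma blk18_mul (a a' : R) (w v w' v' : Fin (2*n-1) → R)
    (D D' : Matrix (Fin (2*n-1)) (Fin (2*n-1)) R) :
    blk18 a w v D * blk18 a' w' v' D' =
      blk18 (a * a' + ∑ k, w k * v' k)
        (fun j => a * w' j + ∑ k, w k * D' k j)
        (fun i => v i * a' + ∑ k, D i k * v' k)
        (Matrix.vecMulVec v w' + D * D') := by
  ext i j
  obtain ⟨iv, hi⟩ := i
  obtain ⟨jv, hj⟩ := j
  rw [Matrix.mul_apply, sum_split18 (show 0 < 2*n by omega)]
  cases iv <;> cases jv <;> rfl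

lemma blk18_transpose (a : R) (w v : Fin (2*n-1) → R)
    (D : Matrix (Fin (2*n-1)) (Fin (2*n-1)) R) :
    (blk18 a w v D)ᵀ = blk18 a v w Dᵀ := by
  ext i j
  obtain ⟨iv, hi⟩ := i
  obtain ⟨jv, hj⟩ := j
  cases iv <;> cases jv <;> rfl

lemma blk18_one : blk18 (1:R) 0 0 (1 : Matrix (Fin (2*n-1)) (Fin (2*n-1)) R) = 1 := by
  ext i j
  obtain ⟨iv, hi⟩ := i
  obtain ⟨jv, hj⟩ := j
  cases iv <;> cases jv <;>
    simp [blk18, Matrix.one_apply, Fin.ext_iff]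

lemma onePerp_blk18 (β : Matrix (Fin (2*n-1)) (Fin (2*n-1)) R) :
    onePerp (n := n) β = blk18 1 0 0 β := by
  ext i j
  obtain ⟨iv, hi⟩ := i
  obtain ⟨jv, hj⟩ := j
  cases iv <;> cases jv <;> rfl

lemma Cmat_blk18 (φ : Matrix (Fin (2*n)) (Fin (2*n)) R) (v : Fin (2*n-1) → R) :
    Cmat φ v = blk18 1 0 v (alphaMat φ v) := by
  ext i j
  obtain ⟨iv, hi⟩ := i
  obtain ⟨jv, hj⟩ := j
  cases iv <;> cases jv <;> rfl

lemma Rmat_blk18 (φ : Matrix (Fin (2*n)) (Fin (2*n)) R) (v : Fin (2*n-1) → R) :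
    Rmat φ v = blk18 1 v 0 (betaMat φ v) := by
  ext i j
  obtain ⟨iv, hi⟩ := i
  obtain ⟨jv, hj⟩ := j
  cases iv <;> cases jv <;> rfl

lemma cvec_blk18 (a : R) (w v : Fin (2*n-1) → R) (D : Matrix (Fin (2*n-1)) (Fin (2*n-1)) R) :
    cvec (blk18 a w v D) = v := funext fun i => rfl

lemma nuMat_blk18 (a : R) (w v : Fin (2*n-1) → R) (D : Matrix (Fin (2*n-1)) (Fin (2*n-1)) R) :
    nuMat (blk18 a w v D) = D := by
  ext i j; rfl

lemma eq_blk18 (hn : 0 < 2*n) (M : Matrix (Fin (2*n)) (Fin (2*n)) R) :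
    M = blk18 (M ⟨0, hn⟩ ⟨0, hn⟩)
        (fun j => M ⟨0, hn⟩ ⟨j.1+1, by have := j.2; omega⟩)
        (cvec M) (nuMat M) := by
  ext i j
  obtain ⟨iv, hi⟩ := i
  obtain ⟨jv, hj⟩ := j
  cases iv <;> cases jv <;> rfl

lemma inv_eq_blk18 (hn : 0 < 2*n) (φ : Matrix (Fin (2*n)) (Fin (2*n)) R) :
    φ⁻¹ = blk18 (φ⁻¹ ⟨0, hn⟩ ⟨0, hn⟩) (dvec φ)
        (fun i => φ⁻¹ ⟨i.1+1, by have := i.2; omega⟩ ⟨0, hn⟩) (muMat φ) := by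
  ext i j
  obtain ⟨iv, hi⟩ := i
  obtain ⟨jv, hj⟩ := j
  cases iv <;> cases jv <;> rfl

@[simp] private lemma vecMulVec_zero_right18 {m : Type*} [Fintype m] (x : m → R) :
    Matrix.vecMulVec x (0 : m → R) = 0 := by
  ext i j; simp [Matrix.vecMulVec_apply]

@[simp] private lemma vecMulVec_zero_left18 {m : Type*} [Fintype m] (y : m → R) :
    Matrix.vecMulVec (0 : m → R) y = 0 := by
  ext i j; simp [Matrix.vecMulVec_apply]

private lemma mul_vecMulVec18 {m : Type*} [Fintype m] [DecidableEq m]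
    (A : Matrix m m R) (x y : m → R) :
    A * Matrix.vecMulVec x y = Matrix.vecMulVec (A.mulVec x) y := by
  ext i j
  simp [Matrix.vecMulVec_apply, Matrix.mul_apply, Matrix.mulVec, dotProduct,
    Finset.sum_mul, mul_assoc]

private lemma vecMulVec_mul18 {m : Type*} [Fintype m] [DecidableEq m]
    (x y : m → R) (A : Matrix m m R) :
    Matrix.vecMulVec x y * A = Matrix.vecMulVec x (Matrix.vecMul y A) := by
  ext i j
  simp [Matrix.vecMulVec_apply, Matrix.mul_apply, Matrix.vecMul, dotProduct,
    Finset.mul_sum, mul_assoc]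

private lemma blk18_diag_mul (A B : Matrix (Fin (2*n-1)) (Fin (2*n-1)) R) :
    blk18 (1:R) 0 0 A * blk18 1 0 0 B = blk18 1 0 0 (A * B) := by
  rw [blk18_mul]
  apply blk18_congr
  · simp
  · funext j; simp
  · funext i; simp
  · simp

lemma onePerp_mul18 (A B : Matrix (Fin (2*n-1)) (Fin (2*n-1)) R) :
    onePerp (n := n) A * onePerp (n := n) B = onePerp (n := n) (A * B) := by
  rw [onePerp_blk18, onePerp_blk18, onePerp_blk18, blk18_diag_mul]

lemma onePerp_one18 : onePerp (n := n) (1 : Matrix (Fin (2*n-1)) (Fin (2*n-1)) R) = 1 := by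
  rw [onePerp_blk18, blk18_one]

lemma alphaMat_eq18 (φ : Matrix (Fin (2*n)) (Fin (2*n)) R) (v : Fin (2*n-1) → R) :
    alphaMat φ v = 1 + Matrix.vecMulVec (dvec φ) v * nuMat φ := by
  ext i j
  simp [alphaMat, Matrix.vecMulVec_apply, Matrix.mul_apply, Matrix.add_apply,
    Finset.mul_sum, mul_assoc]

lemma betaMat_eq18 (φ : Matrix (Fin (2*n)) (Fin (2*n)) R) (v : Fin (2*n-1) → R) :
    betaMat φ v = 1 + muMat φ * Matrix.vecMulVec v (cvec φ) := by
  ext i j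
  simp [betaMat, Matrix.vecMulVec_apply, Matrix.mul_apply, Matrix.add_apply,
    Finset.sum_mul, mul_assoc]

end Aux18


section Key18

variable {R : Type*} [CommRing R] {n : ℕ}

lemma key_rel18 (hn : 0 < 2*n) (φ φstar : Matrix (Fin (2*n)) (Fin (2*n)) R)
    (hinvstar : IsUnit φstar) (ε : (Matrix (Fin (2*n-1)) (Fin (2*n-1)) R)ˣ)
    (hrel : φ = (onePerp (n := n) (ε : Matrix (Fin (2*n-1)) (Fin (2*n-1)) R))ᵀ * φstar *
        onePerp (n := n) (ε : Matrix (Fin (2*n-1)) (Fin (2*n-1)) R)) :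
    (∀ v, onePerp (n := n) (ε : Matrix (Fin (2*n-1)) (Fin (2*n-1)) R) * Cmat φ v
        = Cmat φstar ((ε : Matrix (Fin (2*n-1)) (Fin (2*n-1)) R).mulVec v) *
          onePerp (n := n) (ε : Matrix (Fin (2*n-1)) (Fin (2*n-1)) R)) ∧
    (∀ v, onePerp (n := n) (ε : Matrix (Fin (2*n-1)) (Fin (2*n-1)) R) * Rmat φ v
        = Rmat φstar (((ε⁻¹ : (Matrix (Fin (2*n-1)) (Fin (2*n-1)) R)ˣ) :
              Matrix (Fin (2*n-1)) (Fin (2*n-1)) R)ᵀ.mulVec v) *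
          onePerp (n := n) (ε : Matrix (Fin (2*n-1)) (Fin (2*n-1)) R)) := by
  set e : Matrix (Fin (2*n-1)) (Fin (2*n-1)) R := (ε : Matrix (Fin (2*n-1)) (Fin (2*n-1)) R)
    with he_def
  set e' : Matrix (Fin (2*n-1)) (Fin (2*n-1)) R :=
    ((ε⁻¹ : (Matrix (Fin (2*n-1)) (Fin (2*n-1)) R)ˣ) : Matrix (Fin (2*n-1)) (Fin (2*n-1)) R)
    with he'_def
  have hee' : e * e' = 1 := ε.mul_inv
  have he'e : e' * e = 1 := ε.inv_mul
  -- φ in block form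
  have hφ : φ = blk18 (φstar ⟨0, hn⟩ ⟨0, hn⟩)
      (fun j => ∑ k, (φstar ⟨0, hn⟩ ⟨k.1+1, by have := k.2; omega⟩) * e k j)
      (eᵀ.mulVec (cvec φstar)) (eᵀ * nuMat φstar * e) := by
    conv_lhs => rw [hrel, eq_blk18 hn φstar, onePerp_blk18, blk18_transpose,
      blk18_mul, blk18_mul]
    apply blk18_congr
    · simp
    · funext j; simp
    · funext i; simp [Matrix.mulVec, dotProduct]
    · simp [Matrix.mul_assoc]
  have hc : cvec φ = eᵀ.mulVec (cvec φstar) := by rw [hφ, cvec_blk18]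
  have hnu : nuMat φ = eᵀ * nuMat φstar * e := by rw [hφ, nuMat_blk18]
  -- φ⁻¹ in block form
  have hstar1 : φstar * φstar⁻¹ = 1 :=
    Matrix.mul_nonsing_inv _ ((Matrix.isUnit_iff_isUnit_det _).mp hinvstar)
  have hφinv : φ⁻¹ = blk18 1 0 0 e' * φstar⁻¹ * (blk18 1 0 0 e')ᵀ := by
    apply Matrix.inv_eq_right_inv
    rw [hrel, onePerp_blk18, blk18_transpose, blk18_transpose]
    have h1 : blk18 (1:R) 0 0 e * blk18 1 0 0 e' = 1 := by
      rw [blk18_diag_mul, hee', blk18_one]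
    have h2 : blk18 (1:R) 0 0 eᵀ * blk18 1 0 0 e'ᵀ = 1 := by
      rw [blk18_diag_mul, ← Matrix.transpose_mul, he'e, Matrix.transpose_one, blk18_one]
    calc (blk18 1 0 0 eᵀ * φstar * blk18 1 0 0 e) * (blk18 1 0 0 e' * φstar⁻¹ * blk18 1 0 0 e'ᵀ)
        = blk18 1 0 0 eᵀ * (φstar * ((blk18 1 0 0 e * blk18 1 0 0 e') *
            (φstar⁻¹ * blk18 1 0 0 e'ᵀ))) := by
          simp only [Matrix.mul_assoc]
      _ = blk18 1 0 0 eᵀ * (φstar * (φstar⁻¹ * blk18 1 0 0 e'ᵀ)) := by rw [h1, Matrix.one_mul]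
      _ = blk18 1 0 0 eᵀ * blk18 1 0 0 e'ᵀ := by
          rw [← Matrix.mul_assoc φstar, hstar1, Matrix.one_mul]
      _ = 1 := h2
  have hφinvblk : φ⁻¹ = blk18 (φstar⁻¹ ⟨0, hn⟩ ⟨0, hn⟩)
      (fun j => ∑ k, dvec φstar k * e'ᵀ k j)
      (e'.mulVec (fun i => φstar⁻¹ ⟨i.1+1, by have := i.2; omega⟩ ⟨0, hn⟩))
      (e' * muMat φstar * e'ᵀ) := by
    conv_lhs => rw [hφinv, inv_eq_blk18 hn φstar, blk18_transpose, blk18_mul, blk18_mul]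
    apply blk18_congr
    · simp
    · funext j; simp
    · funext i; simp [Matrix.mulVec, dotProduct]
    · simp [Matrix.mul_assoc]
  have hd : dvec φ = e'.mulVec (dvec φstar) := by
    funext j
    have h1 : dvec φ j = ∑ k, dvec φstar k * e'ᵀ k j := by
      unfold dvec
      rw [hφinvblk]
      rfl
    rw [h1]
    simp [Matrix.mulVec, dotProduct, Matrix.transpose_apply, mul_comm]
  have hmu : muMat φ = e' * muMat φstar * e'ᵀ := by
    ext i j
    have h1 : muMat φ i j = φ⁻¹ ⟨i.1+1, by have := i.2; omega⟩ ⟨j.1+1, by have := j.2; omega⟩ :=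
      rfl
    rw [h1, hφinvblk]
    rfl
  -- alpha and beta
  have halpha : ∀ v, e * alphaMat φ v = alphaMat φstar (e.mulVec v) * e := by
    intro v
    rw [alphaMat_eq18 φ v, alphaMat_eq18 φstar (e.mulVec v), hd, hnu]
    rw [mul_add, add_mul, mul_one, one_mul]
    congr 1
    rw [← Matrix.mul_assoc, mul_vecMulVec18, Matrix.mulVec_mulVec, hee', Matrix.one_mulVec]
    rw [show eᵀ * nuMat φstar * e = eᵀ * (nuMat φstar * e) from Matrix.mul_assoc _ _ _]
    rw [← Matrix.mul_assoc, vecMulVec_mul18, Matrix.vecMul_transpose, Matrix.mul_assoc]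
  have hbeta : ∀ v, e * betaMat φ v = betaMat φstar (e'ᵀ.mulVec v) * e := by
    intro v
    rw [betaMat_eq18 φ v, betaMat_eq18 φstar (e'ᵀ.mulVec v), hmu, hc]
    rw [mul_add, add_mul, mul_one, one_mul]
    congr 1
    calc e * (e' * muMat φstar * e'ᵀ * Matrix.vecMulVec v (eᵀ.mulVec (cvec φstar)))
        = (e * e') * (muMat φstar * (e'ᵀ * Matrix.vecMulVec v (eᵀ.mulVec (cvec φstar)))) := by
          simp only [Matrix.mul_assoc]
      _ = muMat φstar * (e'ᵀ * Matrix.vecMulVec v (eᵀ.mulVec (cvec φstar))) := by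
          rw [hee', Matrix.one_mul]
      _ = muMat φstar * Matrix.vecMulVec (e'ᵀ.mulVec v) (eᵀ.mulVec (cvec φstar)) := by
          rw [mul_vecMulVec18]
      _ = muMat φstar * Matrix.vecMulVec (e'ᵀ.mulVec v) (Matrix.vecMul (cvec φstar) e) := by
          rw [Matrix.mulVec_transpose e (cvec φstar)]
      _ = muMat φstar * Matrix.vecMulVec (e'ᵀ.mulVec v) (cvec φstar) * e := by
          rw [Matrix.mul_assoc, vecMulVec_mul18]
  refine ⟨fun v => ?_, fun v => ?_⟩
  · rw [onePerp_blk18, Cmat_blk18 φ v, Cmat_blk18 φstar (e.mulVec v), blk18_mul, blk18_mul]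
    apply blk18_congr
    · simp
    · funext j; simp
    · funext i; simp [Matrix.mulVec, dotProduct]
    · simpa using halpha v
  · have hv' : Matrix.vecMul (e'ᵀ.mulVec v) e = v := by
      rw [Matrix.mulVec_transpose, Matrix.vecMul_vecMul, he'e, Matrix.vecMul_one]
    rw [onePerp_blk18, Rmat_blk18 φ v, Rmat_blk18 φstar (e'ᵀ.mulVec v), blk18_mul, blk18_mul]
    apply blk18_congr
    · simp
    · funext j
      have h2 := congrFun hv' j
      simp only [Matrix.vecMul, dotProduct] at h2
      simpa using h2.symm
    · funext i; simp
    · simpa using hbeta v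
end Key18


section Conj18

variable {R : Type*} [CommRing R] {n : ℕ}

/-- The unit `1 ⊥ ε`. -/
def etaU18 (ε : (Matrix (Fin (2*n-1)) (Fin (2*n-1)) R)ˣ) :
    (Matrix (Fin (2*n)) (Fin (2*n)) R)ˣ :=
  ⟨onePerp (n := n) (ε : Matrix (Fin (2*n-1)) (Fin (2*n-1)) R),
   onePerp (n := n) ((ε⁻¹ : (Matrix (Fin (2*n-1)) (Fin (2*n-1)) R)ˣ) :
      Matrix (Fin (2*n-1)) (Fin (2*n-1)) R),
   by rw [onePerp_mul18, Units.mul_inv, onePerp_one18],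
   by rw [onePerp_mul18, Units.inv_mul, onePerp_one18]⟩

lemma conj_resp_le18 (I : Ideal R) (φ φstar : Matrix (Fin (2*n)) (Fin (2*n)) R)
    (u : (Matrix (Fin (2*n)) (Fin (2*n)) R)ˣ)
    (A B : Matrix (Fin (2*n-1)) (Fin (2*n-1)) R)
    (hC : ∀ v, (u : Matrix (Fin (2*n)) (Fin (2*n)) R) * Cmat φ v
        = Cmat φstar (A.mulVec v) * (u : Matrix (Fin (2*n)) (Fin (2*n)) R))
    (hR : ∀ v, (u : Matrix (Fin (2*n)) (Fin (2*n)) R) * Rmat φ v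
        = Rmat φstar (B.mulVec v) * (u : Matrix (Fin (2*n)) (Fin (2*n)) R)) :
    ∀ g ∈ REsp φ I, u * g * u⁻¹ ∈ REsp φstar I := by
  have hval : ∀ (g : (Matrix (Fin (2*n)) (Fin (2*n)) R)ˣ)
      (X Y : Matrix (Fin (2*n)) (Fin (2*n)) R),
      (g : Matrix (Fin (2*n)) (Fin (2*n)) R) = X →
      ((u : Matrix (Fin (2*n)) (Fin (2*n)) R) * X = Y * u) →
      ((u * g * u⁻¹ : (Matrix (Fin (2*n)) (Fin (2*n)) R)ˣ) :
        Matrix (Fin (2*n)) (Fin (2*n)) R) = Y := by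
    intro g X Y hg h
    rw [Units.val_mul, Units.val_mul, hg, h, Matrix.mul_assoc, Units.mul_inv, Matrix.mul_one]
  have hEsp : ∀ g ∈ Esp φ, u * g * u⁻¹ ∈ Esp φstar := by
    intro g hg
    have hle : Esp φ ≤ (Esp φstar).comap ((MulAut.conj u).toMonoidHom) := by
      unfold Esp
      rw [Subgroup.closure_le]
      rintro x ⟨v, hv | hv⟩
      · simp only [SetLike.mem_coe, Subgroup.mem_comap, MulEquiv.coe_toMonoidHom,
          MulAut.conj_apply]
        exact Subgroup.subset_closure ⟨A.mulVec v, Or.inl (hval x _ _ hv (hC v))⟩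
      · simp only [SetLike.mem_coe, Subgroup.mem_comap, MulEquiv.coe_toMonoidHom,
          MulAut.conj_apply]
        exact Subgroup.subset_closure ⟨B.mulVec v, Or.inr (hval x _ _ hv (hR v))⟩
    have := hle hg
    simpa only [Subgroup.mem_comap, MulEquiv.coe_toMonoidHom, MulAut.conj_apply] using this
  have hEspI : ∀ g ∈ EspIdeal φ I, u * g * u⁻¹ ∈ EspIdeal φstar I := by
    intro g hg
    have hle : EspIdeal φ I ≤ (EspIdeal φstar I).comap ((MulAut.conj u).toMonoidHom) := by
      unfold EspIdeal
      rw [Subgroup.closure_le]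
      rintro x ⟨v, hvI, hv | hv⟩
      · simp only [SetLike.mem_coe, Subgroup.mem_comap, MulEquiv.coe_toMonoidHom,
          MulAut.conj_apply]
        refine Subgroup.subset_closure ⟨A.mulVec v, fun i => ?_, Or.inl (hval x _ _ hv (hC v))⟩
        show ∑ k, A i k * v k ∈ I
        exact Ideal.sum_mem I fun k _ => I.mul_mem_left _ (hvI k)
      · simp only [SetLike.mem_coe, Subgroup.mem_comap, MulEquiv.coe_toMonoidHom,
          MulAut.conj_apply]
        refine Subgroup.subset_closure ⟨B.mulVec v, fun i => ?_, Or.inr (hval x _ _ hv (hR v))⟩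
        show ∑ k, B i k * v k ∈ I
        exact Ideal.sum_mem I fun k _ => I.mul_mem_left _ (hvI k)
    have := hle hg
    simpa only [Subgroup.mem_comap, MulEquiv.coe_toMonoidHom, MulAut.conj_apply] using this
  intro g hg
  have hle : REsp φ I ≤ (REsp φstar I).comap ((MulAut.conj u).toMonoidHom) := by
    unfold REsp
    rw [Subgroup.closure_le]
    rintro x ⟨e, he, y, hy, rfl⟩
    simp only [SetLike.mem_coe, Subgroup.mem_comap, MulEquiv.coe_toMonoidHom, MulAut.conj_apply]
    apply Subgroup.subset_closure
    refine ⟨u * e * u⁻¹, hEsp e he, u * y * u⁻¹, hEspI y hy, ?_⟩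
    group
  have := hle hg
  simpa only [Subgroup.mem_comap, MulEquiv.coe_toMonoidHom, MulAut.conj_apply] using this

end Conj18


/-- if `φ = (1 ⊥ ε)ᵀ φ* (1 ⊥ ε)` with `ε ∈ E_{2n-1}(R,I)`, then
`ESp_φ(R,I) = (1 ⊥ ε)⁻¹ ESp_{φ*}(R,I) (1 ⊥ ε)`. -/
theorem resp_conjugation {R : Type*} [CommRing R] (n : ℕ) (I : Ideal R)
    (φ φstar : Matrix (Fin (2*n)) (Fin (2*n)) R)
    (hskew : φᵀ = -φ) (hinv : IsUnit φ)
    (hskewstar : φstarᵀ = -φstar) (hinvstar : IsUnit φstar)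
    (ε : (Matrix (Fin (2*n-1)) (Fin (2*n-1)) R)ˣ) (hε : ε ∈ REgrp R (2*n-1) I)
    (hrel : φ = (onePerp (n := n) (ε : Matrix (Fin (2*n-1)) (Fin (2*n-1)) R))ᵀ * φstar *
        onePerp (n := n) (ε : Matrix (Fin (2*n-1)) (Fin (2*n-1)) R)) :
    ∀ g : (Matrix (Fin (2*n)) (Fin (2*n)) R)ˣ, g ∈ REsp φ I ↔
      ∃ h ∈ REsp φstar I, (g : Matrix (Fin (2*n)) (Fin (2*n)) R) =
        onePerp (n := n) ((ε⁻¹ : (Matrix (Fin (2*n-1)) (Fin (2*n-1)) R)ˣ) :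
            Matrix (Fin (2*n-1)) (Fin (2*n-1)) R) *
          (h : Matrix (Fin (2*n)) (Fin (2*n)) R) *
          onePerp (n := n) (ε : Matrix (Fin (2*n-1)) (Fin (2*n-1)) R) := by
  intro g
  rcases Nat.eq_zero_or_pos n with hn0 | hnpos
  · subst hn0
    haveI : IsEmpty (Fin (2*0)) := inferInstanceAs (IsEmpty (Fin 0))
    haveI : Subsingleton (Matrix (Fin (2*0)) (Fin (2*0)) R) :=
      ⟨fun M N => by funext i; exact isEmptyElim i⟩
    haveI : Subsingleton (Matrix (Fin (2*0)) (Fin (2*0)) R)ˣ :=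
      ⟨fun a b => Units.ext (Subsingleton.elim _ _)⟩
    constructor
    · intro _
      exact ⟨1, Subgroup.one_mem _, Subsingleton.elim _ _⟩
    · intro _
      have hg1 : g = 1 := Subsingleton.elim _ _
      rw [hg1]
      exact Subgroup.one_mem _
  · have hn : 0 < 2*n := by omega
    obtain ⟨hC, hR⟩ := key_rel18 hn φ φstar hinvstar ε hrel
    have hrel' : φstar = (onePerp (n := n) ((ε⁻¹ : (Matrix (Fin (2*n-1)) (Fin (2*n-1)) R)ˣ) :
          Matrix (Fin (2*n-1)) (Fin (2*n-1)) R))ᵀ * φ *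
        onePerp (n := n) ((ε⁻¹ : (Matrix (Fin (2*n-1)) (Fin (2*n-1)) R)ˣ) :
          Matrix (Fin (2*n-1)) (Fin (2*n-1)) R) := by
      rw [hrel]
      set e : Matrix (Fin (2*n-1)) (Fin (2*n-1)) R := (ε : Matrix (Fin (2*n-1)) (Fin (2*n-1)) R)
      set e' : Matrix (Fin (2*n-1)) (Fin (2*n-1)) R :=
        ((ε⁻¹ : (Matrix (Fin (2*n-1)) (Fin (2*n-1)) R)ˣ) :
          Matrix (Fin (2*n-1)) (Fin (2*n-1)) R)
      have hee' : e * e' = 1 := ε.mul_inv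
      have he'e : e' * e = 1 := ε.inv_mul
      calc φstar = 1ᵀ * φstar * 1 := by simp
        _ = (onePerp (n := n) e * onePerp (n := n) e')ᵀ * φstar *
              (onePerp (n := n) e * onePerp (n := n) e') := by
            rw [onePerp_mul18, hee', onePerp_one18]
        _ = (onePerp (n := n) e')ᵀ * ((onePerp (n := n) e)ᵀ * φstar * onePerp (n := n) e) *
              onePerp (n := n) e' := by
            rw [Matrix.transpose_mul]
            simp only [Matrix.mul_assoc]
    obtain ⟨hC', hR'⟩ := key_rel18 hn φstar φ hinv ε⁻¹ hrel'
    constructor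
    · intro hg
      refine ⟨etaU18 ε * g * (etaU18 ε)⁻¹,
        conj_resp_le18 I φ φstar (etaU18 ε) _ _ hC hR g hg, ?_⟩
      conv_lhs => rw [show g = (etaU18 ε)⁻¹ * (etaU18 ε * g * (etaU18 ε)⁻¹) * etaU18 ε by group]
      rfl
    · rintro ⟨h, hh, hgh⟩
      have hmem := conj_resp_le18 I φstar φ (etaU18 (n := n) ε⁻¹) _ _ hC' hR' h hh
      have hg : g = etaU18 (n := n) ε⁻¹ * h * (etaU18 (n := n) ε⁻¹)⁻¹ := by
        apply Units.ext
        exact hgh.trans rfl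
      rw [hg]
      exact hmem


end PaperESp
end

section
/- Let R be a commutative ring with unity in which 2 is invertible (R = 2R), let n ≥ 2, and let I be an ideal of R. Then the relative elementary symplectic group ESp_{2n}(R,I) is the smallest normal subgroup of ESp_{2n}(R) containing the elements se_{21}(x) for all x ∈ I. -/
/- Common definitions: symplectic groups with respect to an invertible
   skew-symmetric (alternating) matrix, elementary symplectic groups,
   Pfaffian, standard symplectic matrix, elementary linear groups. -/

namespace PaperESp

open Matrix

variable {R : Type*} [CommRing R]

lemma sigma_val_even {n : ℕ} {i : Fin (2*n)} (h : i.1 % 2 = 0) :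
    (sigmaFn n i).1 = i.1 + 1 := by unfold sigmaFn; rw [dif_pos h]

lemma sigma_val_odd {n : ℕ} {i : Fin (2*n)} (h : i.1 % 2 = 1) :
    (sigmaFn n i).1 = i.1 - 1 := by unfold sigmaFn; rw [dif_neg (by omega)]

lemma sigma_sigma (n : ℕ) (i : Fin (2*n)) : sigmaFn n (sigmaFn n i) = i := by
  ext
  rcases Nat.even_or_odd i.1 with h | h
  · have h0 : i.1 % 2 = 0 := Nat.even_iff.mp h
    have h1 := sigma_val_even (n := n) h0
    have h2 : (sigmaFn n i).1 % 2 = 1 := by omega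
    rw [sigma_val_odd h2]; omega
  · have h0 : i.1 % 2 = 1 := Nat.odd_iff.mp h
    have h1 := sigma_val_odd (n := n) h0
    have h2 : (sigmaFn n i).1 % 2 = 0 := by omega
    rw [sigma_val_even h2]; omega

lemma sigma_ne (n : ℕ) (i : Fin (2*n)) : sigmaFn n i ≠ i := by
  intro h
  have h' := congrArg Fin.val h
  rcases Nat.even_or_odd i.1 with h0 | h0
  · rw [sigma_val_even (Nat.even_iff.mp h0)] at h'; omega
  · have := Nat.odd_iff.mp h0
    rw [sigma_val_odd this] at h'; omega

lemma sigma_val_cases (n : ℕ) (i : Fin (2*n)) :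
    (sigmaFn n i).1 = i.1 + 1 ∨ i.1 = (sigmaFn n i).1 + 1 := by
  rcases Nat.even_or_odd i.1 with h | h
  · left; exact sigma_val_even (Nat.even_iff.mp h)
  · right; have h0 := Nat.odd_iff.mp h; rw [sigma_val_odd h0]; omega

lemma neg_one_pow_sigma (n : ℕ) (i : Fin (2*n)) :
    ((-1 : R)) ^ (sigmaFn n i).1 = -(-1) ^ i.1 := by
  rcases sigma_val_cases n i with h | h
  · rw [h, pow_succ]; ring
  · conv_rhs => rw [h]
    rw [pow_succ]; ring

lemma sigma_inj {n : ℕ} {i j : Fin (2*n)} (h : sigmaFn n i = sigmaFn n j) : i = j := by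
  have := congrArg (sigmaFn n) h
  rwa [sigma_sigma, sigma_sigma] at this

lemma eq_sigma_comm {n : ℕ} {i j : Fin (2*n)} : i = sigmaFn n j ↔ j = sigmaFn n i := by
  constructor <;> (intro h; subst h; rw [sigma_sigma])


/-- matrix unit with entry 1 -/
def E {m : ℕ} (R : Type*) [CommRing R] (i j : Fin m) : Matrix (Fin m) (Fin m) R :=
  Matrix.single i j 1

lemma std_eq_smul {m : ℕ} (i j : Fin m) (a : R) :
    Matrix.single i j a = a • E R i j := by
  rw [E, Matrix.smul_single, smul_eq_mul, mul_one]

lemma E_mul_same {m : ℕ} (i j k : Fin m) : E R i j * E R j k = E R i k := by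
  rw [E, E, E]
  rw [Matrix.single_mul_single_same]
  rw [one_mul]

lemma E_mul_ne {m : ℕ} {j k : Fin m} (h : j ≠ k) (i l : Fin m) :
    E R i j * E R k l = 0 := by
  rw [E, E]
  exact Matrix.single_mul_single_of_ne (h := h) ..

lemma seMat_long {n : ℕ} {i j : Fin (2*n)} (h : i = sigmaFn n j) (a : R) :
    seMat n i j a = 1 + a • E R i j := by
  rw [seMat, if_pos h, std_eq_smul]

lemma seMat_short {n : ℕ} {i j : Fin (2*n)} (h : i ≠ sigmaFn n j) (a : R) :
    seMat n i j a = 1 + a • E R i j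
      - ((-1:R)^(i.1+j.1) * a) • E R (sigmaFn n j) (sigmaFn n i) := by
  rw [seMat, if_neg h, std_eq_smul, std_eq_smul]



lemma seMat_zero {n : ℕ} (i j : Fin (2*n)) : seMat n i j (0:R) = 1 := by
  by_cases h : i = sigmaFn n j
  · rw [seMat_long h, zero_smul, add_zero]
  · rw [seMat_short h, zero_smul, mul_zero, zero_smul, add_zero, sub_zero]

lemma seMat_add {n : ℕ} {i j : Fin (2*n)} (hij : i ≠ j) (a b : R) :
    seMat n i j a * seMat n i j b = seMat n i j (a+b) := by
  have hji : j ≠ i := hij.symm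
  by_cases h : i = sigmaFn n j
  · rw [seMat_long h, seMat_long h, seMat_long h]
    simp only [mul_add, add_mul, one_mul, mul_one, smul_mul_assoc, mul_smul_comm,
      smul_smul, E_mul_ne hji, smul_zero, add_zero]
    module
  · rw [seMat_short h, seMat_short h, seMat_short h]
    have h2 : j ≠ sigmaFn n j := (sigma_ne n j).symm
    have h3 : sigmaFn n i ≠ i := sigma_ne n i
    have h4 : sigmaFn n i ≠ sigmaFn n j := fun hh => hij (sigma_inj hh)
    simp only [sub_mul, mul_sub, mul_add, add_mul, one_mul, mul_one, smul_mul_assoc,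
      mul_smul_comm, smul_smul, E_mul_ne hji, E_mul_ne h2, E_mul_ne h3, E_mul_ne h4,
      smul_zero, add_zero, sub_zero, zero_sub]
    module

lemma C1mat {n : ℕ} {j k : Fin (2*n)} (hkj : k ≠ j) (hksj : k ≠ sigmaFn n j) (a b : R) :
    seMat n (sigmaFn n j) j a * seMat n j k b *
      seMat n (sigmaFn n j) j (-a) * seMat n j k (-b)
    = seMat n (sigmaFn n j) k (a*b) *
        seMat n (sigmaFn n k) k (-((-1:R)^(j.1+k.1)) * (a*b*b)) := by
  have hjk : j ≠ k := hkj.symm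
  have hjsk : j ≠ sigmaFn n k := fun h => hksj (eq_sigma_comm.mp h)
  have d3 : j ≠ sigmaFn n j := (sigma_ne n j).symm
  have d4 : sigmaFn n j ≠ j := sigma_ne n j
  have d5 : k ≠ sigmaFn n k := (sigma_ne n k).symm
  have d6 : sigmaFn n k ≠ k := sigma_ne n k
  have d8 : sigmaFn n k ≠ j := hjsk.symm
  have d10 : sigmaFn n j ≠ k := hksj.symm
  have d11 : sigmaFn n j ≠ sigmaFn n k := fun h => hjk (sigma_inj h)
  have d12 : sigmaFn n k ≠ sigmaFn n j := d11.symm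
  rw [seMat_long rfl a, seMat_short hjsk b, seMat_long rfl (-a), seMat_short hjsk (-b),
    seMat_short d11, seMat_long rfl]
  simp only [sigma_sigma, pow_add, neg_one_pow_sigma, sub_mul, mul_sub, mul_add, add_mul,
    one_mul, mul_one, smul_mul_assoc, mul_smul_comm, smul_smul, E_mul_same,
    E_mul_ne hjk, E_mul_ne hkj, E_mul_ne d3, E_mul_ne d4, E_mul_ne d5, E_mul_ne d6,
    E_mul_ne hjsk, E_mul_ne d8, E_mul_ne hksj, E_mul_ne d10, E_mul_ne d11, E_mul_ne d12,
    smul_zero, zero_smul, add_zero, zero_add, sub_zero, zero_sub]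
  module

lemma C3mat {n : ℕ} {i k : Fin (2*n)} (hki : k ≠ i) (hksi : k ≠ sigmaFn n i) (a b : R) :
    seMat n i k a * seMat n i (sigmaFn n k) b *
      seMat n i k (-a) * seMat n i (sigmaFn n k) (-b)
    = seMat n i (sigmaFn n i) (2*(-1:R)^(i.1+k.1)*a*b) := by
  have hik : i ≠ k := hki.symm
  have hisk : i ≠ sigmaFn n k := fun h => hksi (eq_sigma_comm.mp h)
  have d3 : i ≠ sigmaFn n i := (sigma_ne n i).symm
  have d4 : sigmaFn n i ≠ i := sigma_ne n i
  have d5 : k ≠ sigmaFn n k := (sigma_ne n k).symm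
  have d6 : sigmaFn n k ≠ k := sigma_ne n k
  have d8 : sigmaFn n k ≠ i := hisk.symm
  have d10 : sigmaFn n i ≠ k := hksi.symm
  have d11 : sigmaFn n i ≠ sigmaFn n k := fun h => hik (sigma_inj h)
  have d12 : sigmaFn n k ≠ sigmaFn n i := d11.symm
  have h2 : i ≠ sigmaFn n (sigmaFn n k) := by rw [sigma_sigma]; exact hik
  rw [seMat_short hisk a, seMat_short h2 b, seMat_short hisk (-a), seMat_short h2 (-b),
    seMat_long (sigma_sigma n i).symm]
  simp only [sigma_sigma, pow_add, neg_one_pow_sigma, sub_mul, mul_sub, mul_add, add_mul,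
    one_mul, mul_one, smul_mul_assoc, mul_smul_comm, smul_smul, E_mul_same,
    E_mul_ne hik, E_mul_ne hki, E_mul_ne d3, E_mul_ne d4, E_mul_ne d5, E_mul_ne d6,
    E_mul_ne hisk, E_mul_ne d8, E_mul_ne hksi, E_mul_ne d10, E_mul_ne d11, E_mul_ne d12,
    smul_zero, zero_smul, add_zero, zero_add, sub_zero, zero_sub]
  module

lemma C4mat {n : ℕ} {i k : Fin (2*n)} (hki : k ≠ i) (hksi : k ≠ sigmaFn n i) (a b : R) :
    seMat n k i a * seMat n (sigmaFn n k) i b *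
      seMat n k i (-a) * seMat n (sigmaFn n k) i (-b)
    = seMat n (sigmaFn n i) i (-(2*(-1:R)^(i.1+k.1))*a*b) := by
  have hik : i ≠ k := hki.symm
  have hisk : i ≠ sigmaFn n k := fun h => hksi (eq_sigma_comm.mp h)
  have d3 : i ≠ sigmaFn n i := (sigma_ne n i).symm
  have d4 : sigmaFn n i ≠ i := sigma_ne n i
  have d5 : k ≠ sigmaFn n k := (sigma_ne n k).symm
  have d6 : sigmaFn n k ≠ k := sigma_ne n k
  have d8 : sigmaFn n k ≠ i := hisk.symm
  have d10 : sigmaFn n i ≠ k := hksi.symm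
  have d11 : sigmaFn n i ≠ sigmaFn n k := fun h => hik (sigma_inj h)
  have d12 : sigmaFn n k ≠ sigmaFn n i := d11.symm
  have h2 : sigmaFn n k ≠ sigmaFn n i := d12
  rw [seMat_short hksi a, seMat_short h2 b, seMat_short hksi (-a), seMat_short h2 (-b),
    seMat_long rfl]
  simp only [sigma_sigma, pow_add, neg_one_pow_sigma, sub_mul, mul_sub, mul_add, add_mul,
    one_mul, mul_one, smul_mul_assoc, mul_smul_comm, smul_smul, E_mul_same,
    E_mul_ne hik, E_mul_ne hki, E_mul_ne d3, E_mul_ne d4, E_mul_ne d5, E_mul_ne d6,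
    E_mul_ne hisk, E_mul_ne d8, E_mul_ne hksi, E_mul_ne d10, E_mul_ne d11, E_mul_ne d12,
    smul_zero, zero_smul, add_zero, zero_add, sub_zero, zero_sub]
  module


def seU (n : ℕ) (i j : Fin (2*n)) (h : i ≠ j) (a : R) :
    (Matrix (Fin (2*n)) (Fin (2*n)) R)ˣ where
  val := seMat n i j a
  inv := seMat n i j (-a)
  val_inv := by rw [seMat_add h, add_neg_cancel, seMat_zero]
  inv_val := by rw [seMat_add h, neg_add_cancel, seMat_zero]

@[simp] lemma seU_val {n : ℕ} (i j : Fin (2*n)) (h : i ≠ j) (a : R) :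
    (↑(seU n i j h a) : Matrix (Fin (2*n)) (Fin (2*n)) R) = seMat n i j a := rfl

lemma seU_inv {n : ℕ} (i j : Fin (2*n)) (h : i ≠ j) (a : R) :
    (seU n i j h a)⁻¹ = seU n i j h (-a) := Units.ext rfl

lemma seU_mul {n : ℕ} (i j : Fin (2*n)) (h : i ≠ j) (a b : R) :
    seU n i j h a * seU n i j h b = seU n i j h (a+b) := Units.ext (seMat_add h a b)

lemma seU_zero {n : ℕ} (i j : Fin (2*n)) (h : i ≠ j) :
    seU n i j h (0:R) = 1 := Units.ext (seMat_zero i j)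

lemma seU_congr {n : ℕ} (i j : Fin (2*n)) (h : i ≠ j) {a b : R} (hab : a = b) :
    seU n i j h a = seU n i j h b := by rw [hab]

lemma seU_mem_Esp {n : ℕ} (i j : Fin (2*n)) (h : i ≠ j) (a : R) :
    seU n i j h a ∈ Esp2n R n :=
  Subgroup.subset_closure ⟨i, j, a, h, rfl⟩

lemma C1u {n : ℕ} {j k : Fin (2*n)} (hkj : k ≠ j) (hksj : k ≠ sigmaFn n j)
    (h1 : sigmaFn n j ≠ j) (h2 : j ≠ k) (h3 : sigmaFn n j ≠ k) (h4 : sigmaFn n k ≠ k)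
    (a b u c : R) (hu : u = a*b) (hc : c = -((-1:R)^(j.1+k.1)) * (a*b*b)) :
    seU n (sigmaFn n j) j h1 a * seU n j k h2 b *
      (seU n (sigmaFn n j) j h1 a)⁻¹ * (seU n j k h2 b)⁻¹
    = seU n (sigmaFn n j) k h3 u * seU n (sigmaFn n k) k h4 c := by
  subst hu hc
  apply Units.ext
  simp only [Units.val_mul, seU_inv, seU_val]
  exact C1mat hkj hksj a b

lemma C3u {n : ℕ} {i k : Fin (2*n)} (hki : k ≠ i) (hksi : k ≠ sigmaFn n i)
    (h1 : i ≠ k) (h2 : i ≠ sigmaFn n k) (h3 : i ≠ sigmaFn n i)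
    (a b c : R) (hc : c = 2*(-1:R)^(i.1+k.1)*a*b) :
    seU n i k h1 a * seU n i (sigmaFn n k) h2 b *
      (seU n i k h1 a)⁻¹ * (seU n i (sigmaFn n k) h2 b)⁻¹
    = seU n i (sigmaFn n i) h3 c := by
  subst hc
  apply Units.ext
  simp only [Units.val_mul, seU_inv, seU_val]
  exact C3mat hki hksi a b

lemma C4u {n : ℕ} {i k : Fin (2*n)} (hki : k ≠ i) (hksi : k ≠ sigmaFn n i)
    (h1 : k ≠ i) (h2 : sigmaFn n k ≠ i) (h3 : sigmaFn n i ≠ i)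
    (a b c : R) (hc : c = -(2*(-1:R)^(i.1+k.1))*a*b) :
    seU n k i h1 a * seU n (sigmaFn n k) i h2 b *
      (seU n k i h1 a)⁻¹ * (seU n (sigmaFn n k) i h2 b)⁻¹
    = seU n (sigmaFn n i) i h3 c := by
  subst hc
  apply Units.ext
  simp only [Units.val_mul, seU_inv, seU_val]
  exact C4mat hki hksi a b

section Memb
variable {n : ℕ} {H : Subgroup (Matrix (Fin (2*n)) (Fin (2*n)) R)ˣ}

lemma commH1 (hnorm : ∀ e ∈ Esp2n R n, ∀ h ∈ H, e * h * e⁻¹ ∈ H)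
    {A B : (Matrix (Fin (2*n)) (Fin (2*n)) R)ˣ}
    (hA : A ∈ H) (hB : B ∈ Esp2n R n) : A * B * A⁻¹ * B⁻¹ ∈ H := by
  have h1 := hnorm B hB A⁻¹ (H.inv_mem hA)
  have he : A * B * A⁻¹ * B⁻¹ = A * (B * A⁻¹ * B⁻¹) := by group
  rw [he]; exact H.mul_mem hA h1

lemma commH2 (hnorm : ∀ e ∈ Esp2n R n, ∀ h ∈ H, e * h * e⁻¹ ∈ H)
    {A B : (Matrix (Fin (2*n)) (Fin (2*n)) R)ˣ}
    (hA : A ∈ Esp2n R n) (hB : B ∈ H) : A * B * A⁻¹ * B⁻¹ ∈ H :=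
  H.mul_mem (hnorm A hA B hB) (H.inv_mem hB)

lemma seU_indep {i i' j j' : Fin (2*n)} (hii : i = i') (hjj : j = j')
    (h : i ≠ j) (h' : i' ≠ j') (a : R) : seU n i j h a = seU n i' j' h' a := by
  subst hii; subst hjj; rfl

lemma D1 {j k : Fin (2*n)} (hkj : k ≠ j) (hksj : k ≠ sigmaFn n j)
    (h1 : sigmaFn n j ≠ j) (h2 : j ≠ k) (h3 : sigmaFn n j ≠ k) (h4 : sigmaFn n k ≠ k)
    (a b : R)
    (hg1 : seU n (sigmaFn n j) j h1 a * seU n j k h2 b *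
      (seU n (sigmaFn n j) j h1 a)⁻¹ * (seU n j k h2 b)⁻¹ ∈ H)
    (hg2 : seU n (sigmaFn n j) j h1 a * seU n j k h2 (-b) *
      (seU n (sigmaFn n j) j h1 a)⁻¹ * (seU n j k h2 (-b))⁻¹ ∈ H) :
    seU n (sigmaFn n j) k h3 (2*(a*b)) ∈ H := by
  set c : R := -((-1:R)^(j.1+k.1)) * (a*b*b) with hc
  have e1 := C1u hkj hksj h1 h2 h3 h4 a b (a*b) c rfl rfl
  have e2 := C1u hkj hksj h1 h2 h3 h4 a (-b) (-(a*b)) c (by ring) (by rw [hc]; ring)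
  have hmem : (seU n (sigmaFn n j) j h1 a * seU n j k h2 b *
      (seU n (sigmaFn n j) j h1 a)⁻¹ * (seU n j k h2 b)⁻¹) *
      (seU n (sigmaFn n j) j h1 a * seU n j k h2 (-b) *
      (seU n (sigmaFn n j) j h1 a)⁻¹ * (seU n j k h2 (-b))⁻¹)⁻¹ ∈ H :=
    H.mul_mem hg1 (H.inv_mem hg2)
  rw [e1, e2] at hmem
  have heq : (seU n (sigmaFn n j) k h3 (a*b) * seU n (sigmaFn n k) k h4 c) *
      (seU n (sigmaFn n j) k h3 (-(a*b)) * seU n (sigmaFn n k) k h4 c)⁻¹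
      = seU n (sigmaFn n j) k h3 (2*(a*b)) := by
    rw [_root_.mul_inv_rev, seU_inv, seU_inv]
    have : seU n (sigmaFn n j) k h3 (a*b) * seU n (sigmaFn n k) k h4 c *
        (seU n (sigmaFn n k) k h4 (-c) * seU n (sigmaFn n j) k h3 (-(-(a*b))))
        = seU n (sigmaFn n j) k h3 (a*b) *
          (seU n (sigmaFn n k) k h4 c * seU n (sigmaFn n k) k h4 (-c)) *
          seU n (sigmaFn n j) k h3 (-(-(a*b))) := by
      simp [mul_assoc]
    rw [this, seU_mul, add_neg_cancel, seU_zero, mul_one, seU_mul]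
    exact seU_congr _ _ _ (by ring)
  rwa [heq] at hmem

end Memb
lemma key {n : ℕ} (hn : 2 ≤ n) {half : R} (hhalf : 2 * half = 1) (I : Ideal R)
    {H : Subgroup (Matrix (Fin (2*n)) (Fin (2*n)) R)ˣ}
    (hnorm : ∀ e ∈ Esp2n R n, ∀ h ∈ H, e * h * e⁻¹ ∈ H)
    (hgen : ∀ x ∈ I, ∀ g : (Matrix (Fin (2*n)) (Fin (2*n)) R)ˣ,
      (g : Matrix (Fin (2*n)) (Fin (2*n)) R) = seMat n ⟨1, by have h' := hn; omega⟩ ⟨0, by have h' := hn; omega⟩ x →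
        g ∈ H) :
    ∀ (i j : Fin (2*n)) (hij : i ≠ j), ∀ x ∈ I, seU n i j hij x ∈ H := by
  set i0 : Fin (2*n) := ⟨0, by omega⟩ with hi0def
  set i1 : Fin (2*n) := ⟨1, by omega⟩ with hi1def
  set i2 : Fin (2*n) := ⟨2, by omega⟩ with hi2def
  set i3 : Fin (2*n) := ⟨3, by omega⟩ with hi3def
  have hs0 : sigmaFn n i0 = i1 := by
    ext; rw [sigma_val_even (by norm_num)]
  have hs1 : sigmaFn n i1 = i0 := by rw [← hs0, sigma_sigma]
  have hs2 : sigmaFn n i2 = i3 := by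
    ext; rw [sigma_val_even (by norm_num)]
  -- long roots on pair 0, direction (1,0)
  have hlong0 : ∀ x ∈ I, ∀ (h : sigmaFn n i0 ≠ i0), seU n (sigmaFn n i0) i0 h x ∈ H := by
    intro x hx h
    exact hgen x hx _ (by rw [seU_val, hs0])
  -- step 1 : shorts with first index σ i0 = 1
  have step1 : ∀ (k : Fin (2*n)) (hk0 : k ≠ i0) (hk1 : k ≠ sigmaFn n i0)
      (hh : sigmaFn n i0 ≠ k), ∀ x ∈ I, seU n (sigmaFn n i0) k hh x ∈ H := by
    intro k hk0 hk1 hh x hx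
    have h1 : sigmaFn n i0 ≠ i0 := sigma_ne n i0
    have h2 : i0 ≠ k := hk0.symm
    have h4 : sigmaFn n k ≠ k := sigma_ne n k
    have hD := D1 hk0 hk1 h1 h2 hh h4 x half
      (commH1 hnorm (hlong0 x hx h1) (seU_mem_Esp _ _ h2 half))
      (commH1 hnorm (hlong0 x hx h1) (seU_mem_Esp _ _ h2 (-half)))
    rwa [seU_congr _ _ _ (show 2*(x*half) = x by linear_combination x * hhalf)] at hD
  -- step 2 : shorts with first index i0 = 0
  have step2 : ∀ (k : Fin (2*n)) (hk0 : k ≠ i0) (hk1 : k ≠ sigmaFn n i0)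
      (hh : i0 ≠ k), ∀ x ∈ I, seU n i0 k hh x ∈ H := by
    intro k hk0 hk1 hh x hx
    have hkj : k ≠ i1 := by rw [← hs0]; exact hk1
    have hksj : k ≠ sigmaFn n i1 := by rw [hs1]; exact hk0
    have h1 : sigmaFn n i1 ≠ i1 := sigma_ne n i1
    have h2 : i1 ≠ k := hkj.symm
    have h3 : sigmaFn n i1 ≠ k := by rw [hs1]; exact hh
    have h4 : sigmaFn n k ≠ k := sigma_ne n k
    have hh' : sigmaFn n i0 ≠ k := by rw [hs0]; exact h2
    have hBmem : seU n i1 k h2 x ∈ H := by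
      rw [← seU_indep hs0 rfl hh' h2 x]; exact step1 k hk0 hk1 hh' x hx
    have hBmem' : seU n i1 k h2 (-x) ∈ H := by
      rw [← seU_indep hs0 rfl hh' h2 (-x)]; exact step1 k hk0 hk1 hh' (-x) (I.neg_mem hx)
    have hD := D1 hkj hksj h1 h2 h3 h4 half x
      (commH2 hnorm (seU_mem_Esp _ _ h1 half) hBmem)
      (commH2 hnorm (seU_mem_Esp _ _ h1 half) hBmem')
    rw [seU_congr _ _ _ (show 2*(half*x) = x by linear_combination x * hhalf)] at hD
    rwa [seU_indep hs1 rfl h3 hh x] at hD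
  -- step 3 : long roots se_{σ i, i} for i not in pair 0
  have step3 : ∀ (i : Fin (2*n)) (hj0 : i ≠ i0) (hj1 : i ≠ sigmaFn n i0)
      (hh : sigmaFn n i ≠ i), ∀ y ∈ I, seU n (sigmaFn n i) i hh y ∈ H := by
    intro i hj0 hj1 hh y hy
    have hki : i0 ≠ i := hj0.symm
    have hksi : i0 ≠ sigmaFn n i := fun he => hj1 (eq_sigma_comm.mp he)
    have h2 : sigmaFn n i0 ≠ i := fun he => hj1 he.symm
    have hε : (-1:R)^(i.1*2) = 1 := by
      rw [mul_comm, pow_mul]; norm_num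
    have hA : seU n i0 i hki y ∈ H := step2 i hj0 hj1 hki y hy
    have hcomm := commH1 hnorm hA
      (seU_mem_Esp _ _ h2 (-(-1:R)^(i.1+i0.1)*half))
    rwa [C4u hki hksi hki h2 hh y (-(-1:R)^(i.1+i0.1)*half) y
      (by linear_combination (-(2*y*half))*hε + (-y)*hhalf)] at hcomm
  -- step 3b : long root se_{i0, σ i0}
  have step3b : ∀ (hh : i0 ≠ sigmaFn n i0), ∀ y ∈ I, seU n i0 (sigmaFn n i0) hh y ∈ H := by
    intro hh y hy
    have hki : i2 ≠ i0 := by rw [hi2def, hi0def]; exact Fin.ne_of_val_ne (by norm_num)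
    have hksi : i2 ≠ sigmaFn n i0 := by
      rw [hs0, hi2def, hi1def]; exact Fin.ne_of_val_ne (by norm_num)
    have h1 : i0 ≠ i2 := hki.symm
    have h2 : i0 ≠ sigmaFn n i2 := by
      rw [hs2, hi0def, hi3def]; exact Fin.ne_of_val_ne (by norm_num)
    have hA : seU n i0 i2 h1 y ∈ H := step2 i2 hki hksi h1 y hy
    have hcomm := commH1 hnorm hA (seU_mem_Esp _ _ h2 half)
    rwa [C3u hki hksi h1 h2 hh y half y
      (by rw [hi0def, hi2def]; linear_combination (-y) * hhalf)] at hcomm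
  -- all long roots
  have steplong : ∀ (j : Fin (2*n)) (hh : sigmaFn n j ≠ j), ∀ y ∈ I,
      seU n (sigmaFn n j) j hh y ∈ H := by
    intro j hh y hy
    by_cases hj0 : j = i0
    · subst hj0; exact hlong0 y hy hh
    · by_cases hj1 : j = i1
      · subst hj1
        have hh' : i0 ≠ sigmaFn n i0 := (sigma_ne n i0).symm
        rw [seU_indep hs1 hs0.symm hh hh' y]
        exact step3b hh' y hy
      · exact step3 j hj0 (by rw [hs0]; exact hj1) hh y hy
  -- all short roots (and in fact the general case)
  have step4 : ∀ (j k : Fin (2*n)) (hkj : k ≠ j) (hksj : k ≠ sigmaFn n j)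
      (hh : sigmaFn n j ≠ k), ∀ x ∈ I, seU n (sigmaFn n j) k hh x ∈ H := by
    intro j k hkj hksj hh x hx
    have h1 : sigmaFn n j ≠ j := sigma_ne n j
    have h2 : j ≠ k := hkj.symm
    have h4 : sigmaFn n k ≠ k := sigma_ne n k
    have hD := D1 hkj hksj h1 h2 hh h4 x half
      (commH1 hnorm (steplong j h1 x hx) (seU_mem_Esp _ _ h2 half))
      (commH1 hnorm (steplong j h1 x hx) (seU_mem_Esp _ _ h2 (-half)))
    rwa [seU_congr _ _ _ (show 2*(x*half) = x by linear_combination x * hhalf)] at hD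
  -- conclusion
  intro i j hij x hx
  by_cases h : i = sigmaFn n j
  · have hh : sigmaFn n j ≠ j := sigma_ne n j
    rw [seU_indep h rfl hij hh x]
    exact steplong j hh x hx
  · have hkj' : j ≠ sigmaFn n i := fun he => h (eq_sigma_comm.mp he)
    have hksj' : j ≠ sigmaFn n (sigmaFn n i) := by rw [sigma_sigma]; exact hij.symm
    have hh : sigmaFn n (sigmaFn n i) ≠ j := by rw [sigma_sigma]; exact hij
    have := step4 (sigmaFn n i) j hkj' hksj' hh x hx
    rwa [seU_indep (sigma_sigma n i) rfl hh hij x] at this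



/-- for `R = 2R`, `n ≥ 2` and an ideal `I`, `ESp_{2n}(R,I)` is the smallest
normal subgroup of `ESp_{2n}(R)` containing the elements `se_{21}(x)`, `x ∈ I`. -/
theorem resp2n_smallest_normal_containing_se21 {R : Type*} [CommRing R]
    (h2 : IsUnit (2 : R)) (n : ℕ) (hn : 2 ≤ n) (I : Ideal R) :
    REsp2n R n I ≤ Esp2n R n ∧
    (∀ x ∈ I, ∀ g : (Matrix (Fin (2*n)) (Fin (2*n)) R)ˣ,
      (g : Matrix (Fin (2*n)) (Fin (2*n)) R) = seMat n ⟨1, by omega⟩ ⟨0, by omega⟩ x →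
        g ∈ REsp2n R n I) ∧
    (∀ e ∈ Esp2n R n, ∀ x ∈ REsp2n R n I, e * x * e⁻¹ ∈ REsp2n R n I) ∧
    (∀ H : Subgroup (Matrix (Fin (2*n)) (Fin (2*n)) R)ˣ,
      H ≤ Esp2n R n →
      (∀ e ∈ Esp2n R n, ∀ h ∈ H, e * h * e⁻¹ ∈ H) →
      (∀ x ∈ I, ∀ g : (Matrix (Fin (2*n)) (Fin (2*n)) R)ˣ,
        (g : Matrix (Fin (2*n)) (Fin (2*n)) R) = seMat n ⟨1, by omega⟩ ⟨0, by omega⟩ x →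
          g ∈ H) →
      REsp2n R n I ≤ H) := by
  have hIle : Esp2nIdeal R n I ≤ Esp2n R n := by
    refine (Subgroup.closure_le _).mpr ?_
    rintro g ⟨i, j, x, hij, hxI, hval⟩
    exact Subgroup.subset_closure ⟨i, j, x, hij, hval⟩
  have hSle : ∀ g ∈ {g : (Matrix (Fin (2*n)) (Fin (2*n)) R)ˣ |
      ∃ e ∈ Esp2n R n, ∃ x ∈ Esp2nIdeal R n I, g = e * x * e⁻¹}, g ∈ Esp2n R n := by
    rintro g ⟨e, he, x, hx, rfl⟩
    exact mul_mem (mul_mem he (hIle hx)) (inv_mem he)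
  refine ⟨?_, ?_, ?_, ?_⟩
  · exact (Subgroup.closure_le _).mpr hSle
  · intro x hx g hval
    refine Subgroup.subset_closure ⟨1, one_mem _, g, ?_, by group⟩
    exact Subgroup.subset_closure
      ⟨⟨1, by omega⟩, ⟨0, by omega⟩, x, Fin.ne_of_val_ne (by norm_num), hx, hval⟩
  · intro e he x hx
    refine Subgroup.closure_induction
      (p := fun g _ => e * g * e⁻¹ ∈ REsp2n R n I) ?_ ?_ ?_ ?_ hx
    · rintro g ⟨e', he', y, hy, rfl⟩
      exact Subgroup.subset_closure ⟨e * e', mul_mem he he', y, hy, by group⟩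
    · simpa using one_mem (REsp2n R n I)
    · intro g h _ _ hg hh
      have heq : e * (g * h) * e⁻¹ = (e * g * e⁻¹) * (e * h * e⁻¹) := by group
      rw [heq]; exact mul_mem hg hh
    · intro g _ hg
      have heq : e * g⁻¹ * e⁻¹ = (e * g * e⁻¹)⁻¹ := by group
      rw [heq]; exact inv_mem hg
  · intro H hle hnorm hgen
    obtain ⟨half, hhalf⟩ := h2.exists_right_inv
    have hIH : Esp2nIdeal R n I ≤ H := by
      refine (Subgroup.closure_le _).mpr ?_
      rintro g ⟨i, j, x, hij, hxI, hval⟩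
      have hg : g = seU n i j hij x := Units.ext (by rw [hval, seU_val])
      rw [hg]
      exact key hn hhalf I hnorm hgen i j hij x hxI
    refine (Subgroup.closure_le _).mpr ?_
    rintro g ⟨e, he, x, hx, rfl⟩
    exact hnorm e he x (hIH hx)

end PaperESp
end
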